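/- For χ ∈ Γ_n, 1 ≤ k ≤ n, and g(χ) = log σ_k(χ), the matrix with entries g_{ij} + (g_i/χ_j)δ_{ij} is positive semidefinite, where g_i and g_{ij} denote first and second partial derivatives. -/

import Mathlib

open Finset

/-- The `k`-th elementary symmetric polynomial in `n` real variables. -/
noncomputable def esymm (n k : ℕ) (x : Fin n → ℝ) : ℝ :=
  ∑ s ∈ Finset.univ.powersetCard k, ∏ i ∈ s, x i

/-- The `k`-th elementary symmetric polynomial of the variables with the
`i`-th one removed. -/
noncomputable def esymmOmit (n k : ℕ) (x : Fin n → ℝ) (i : Fin n) : ℝ :=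
  ∑ s ∈ (Finset.univ.erase i).powersetCard k, ∏ j ∈ s, x j

/-- The `i`-th partial derivative of a function of `n` real variables. -/
noncomputable def pd (n : ℕ) (g : (Fin n → ℝ) → ℝ) (i : Fin n) (χ : Fin n → ℝ) : ℝ :=
  fderiv ℝ g χ (Pi.single i 1)

/-- The positive orthant `Γ_n`. -/
def Gamma (n : ℕ) : Set (Fin n → ℝ) := {χ | ∀ i, 0 < χ i}

noncomputable def E1 (n k : ℕ) (i : Fin n) (x : Fin n → ℝ) : ℝ :=
  ∑ s ∈ Finset.univ.powersetCard k, if i ∈ s then ∏ j ∈ s.erase i, x j else 0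

noncomputable def E2 (n k : ℕ) (i j : Fin n) (x : Fin n → ℝ) : ℝ :=
  ∑ s ∈ Finset.univ.powersetCard k,
    if i ∈ s ∧ j ∈ s.erase i then ∏ l ∈ (s.erase i).erase j, x l else 0

lemma prod_hasFDerivAt (s : Finset (Fin n)) (χ : Fin n → ℝ) :
    HasFDerivAt (fun x : Fin n → ℝ => ∏ j ∈ s, x j)
      (∑ m ∈ s, (∏ l ∈ s.erase m, χ l) • (ContinuousLinearMap.proj m : (Fin n → ℝ) →L[ℝ] ℝ)) χ := by
  exact hasFDerivAt_finset_prod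

lemma esymm_hasFDerivAt (n k : ℕ) (χ : Fin n → ℝ) :
    HasFDerivAt (esymm n k)
      (∑ s ∈ Finset.univ.powersetCard k,
        ∑ m ∈ s, (∏ l ∈ s.erase m, χ l) • (ContinuousLinearMap.proj m : (Fin n → ℝ) →L[ℝ] ℝ)) χ := by
  exact HasFDerivAt.fun_sum fun s _ => prod_hasFDerivAt s χ

lemma esymm_deriv_apply (n k : ℕ) (χ : Fin n → ℝ) (i : Fin n) :
    (∑ s ∈ Finset.univ.powersetCard k,
        ∑ m ∈ s, (∏ l ∈ s.erase m, χ l) • (ContinuousLinearMap.proj m : (Fin n → ℝ) →L[ℝ] ℝ))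
      (Pi.single i 1) = E1 n k i χ := by
  rw [ContinuousLinearMap.sum_apply, E1]
  refine Finset.sum_congr rfl fun s _ => ?_
  rw [ContinuousLinearMap.sum_apply]
  simp only [ContinuousLinearMap.smul_apply, ContinuousLinearMap.proj_apply, Pi.single_apply,
    smul_eq_mul, mul_ite, mul_one, mul_zero]
  rw [Finset.sum_ite_eq' s i (fun m => ∏ l ∈ s.erase m, χ l)]


lemma E1_hasFDerivAt (n k : ℕ) (i : Fin n) (χ : Fin n → ℝ) :
    HasFDerivAt (E1 n k i)
      (∑ s ∈ Finset.univ.powersetCard k,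
        if i ∈ s then
          (∑ m ∈ s.erase i, (∏ l ∈ (s.erase i).erase m, χ l) •
            (ContinuousLinearMap.proj m : (Fin n → ℝ) →L[ℝ] ℝ))
        else 0) χ := by
  refine HasFDerivAt.fun_sum fun s _ => ?_
  by_cases h : i ∈ s
  · simp only [h, if_true]
    exact prod_hasFDerivAt (s.erase i) χ
  · simp only [h, if_false]
    exact hasFDerivAt_const 0 χ

lemma E1_deriv_apply (n k : ℕ) (χ : Fin n → ℝ) (i j : Fin n) :
    (∑ s ∈ Finset.univ.powersetCard k,
        if i ∈ s then
          (∑ m ∈ s.erase i, (∏ l ∈ (s.erase i).erase m, χ l) •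
            (ContinuousLinearMap.proj m : (Fin n → ℝ) →L[ℝ] ℝ))
        else 0) (Pi.single j 1) = E2 n k i j χ := by
  rw [ContinuousLinearMap.sum_apply, E2]
  refine Finset.sum_congr rfl fun s _ => ?_
  by_cases h : i ∈ s
  · simp only [h, if_true, true_and]
    rw [ContinuousLinearMap.sum_apply]
    simp only [ContinuousLinearMap.smul_apply, ContinuousLinearMap.proj_apply, Pi.single_apply,
      smul_eq_mul, mul_ite, mul_one, mul_zero]
    rw [Finset.sum_ite_eq' (s.erase i) j (fun m => ∏ l ∈ (s.erase i).erase m, χ l)]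
  · simp [h]

lemma esymm_continuous (n k : ℕ) : Continuous (esymm n k) := by
  refine continuous_finset_sum _ fun s _ => continuous_finset_prod s fun i _ => continuous_apply i

lemma pd_g (n k : ℕ) (i : Fin n) (x : Fin n → ℝ) (hx : esymm n k x ≠ 0) :
    pd n (fun y => Real.log (esymm n k y)) i x = E1 n k i x / esymm n k x := by
  have h := (esymm_hasFDerivAt n k x).log hx
  rw [pd, h.fderiv]
  rw [ContinuousLinearMap.smul_apply, esymm_deriv_apply, smul_eq_mul, div_eq_inv_mul]

lemma G1_hasFDerivAt (n k : ℕ) (i : Fin n) (x : Fin n → ℝ) (hx : esymm n k x ≠ 0) :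
    HasFDerivAt (fun y => E1 n k i y / esymm n k y)
      (E1 n k i x • ((-(esymm n k x ^ 2)⁻¹) •
          (∑ s ∈ Finset.univ.powersetCard k,
            ∑ m ∈ s, (∏ l ∈ s.erase m, x l) • (ContinuousLinearMap.proj m : (Fin n → ℝ) →L[ℝ] ℝ)))
        + (esymm n k x)⁻¹ •
          (∑ s ∈ Finset.univ.powersetCard k,
            if i ∈ s then
              (∑ m ∈ s.erase i, (∏ l ∈ (s.erase i).erase m, x l) •
                (ContinuousLinearMap.proj m : (Fin n → ℝ) →L[ℝ] ℝ))
            else 0)) x := by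
  have hinv : HasFDerivAt (fun y => (esymm n k y)⁻¹)
      ((-(esymm n k x ^ 2)⁻¹) • (∑ s ∈ Finset.univ.powersetCard k,
        ∑ m ∈ s, (∏ l ∈ s.erase m, x l) • (ContinuousLinearMap.proj m : (Fin n → ℝ) →L[ℝ] ℝ))) x :=
    (hasDerivAt_inv hx).comp_hasFDerivAt x (esymm_hasFDerivAt n k x)
  have := (E1_hasFDerivAt n k i x).mul hinv
  simp only [div_eq_mul_inv]
  exact this

lemma pd2_g (n k : ℕ) (i j : Fin n) (χ : Fin n → ℝ) (hχ : esymm n k χ ≠ 0) :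
    pd n (pd n (fun y => Real.log (esymm n k y)) i) j χ =
      E2 n k i j χ / esymm n k χ - E1 n k i χ * E1 n k j χ / (esymm n k χ)^2 := by
  have hopen : IsOpen {x : Fin n → ℝ | esymm n k x ≠ 0} :=
    isOpen_compl_singleton.preimage (esymm_continuous n k)
  have hev : pd n (fun y => Real.log (esymm n k y)) i =ᶠ[nhds χ]
      fun x => E1 n k i x / esymm n k x :=
    Filter.eventually_of_mem (hopen.mem_nhds hχ) fun x hx => pd_g n k i x hx
  rw [pd, hev.fderiv_eq, (G1_hasFDerivAt n k i χ hχ).fderiv]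
  rw [ContinuousLinearMap.add_apply, ContinuousLinearMap.smul_apply,
    ContinuousLinearMap.smul_apply, ContinuousLinearMap.smul_apply,
    esymm_deriv_apply, E1_deriv_apply]
  field_simp
  linear_combination (-(esymm n k χ * (esymm n k χ)⁻¹ + 1) * E1 n k j χ * E1 n k i χ
    + esymm n k χ * E2 n k i j χ) * mul_inv_cancel₀ hχ

lemma key1 {n k : ℕ} (χ v : Fin n → ℝ) (hχ : ∀ i, 0 < χ i) :
    ∑ i : Fin n, E1 n k i χ * v i =
      ∑ s ∈ Finset.univ.powersetCard k, (∏ l ∈ s, χ l) * (∑ i ∈ s, v i / χ i) := by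
  simp only [E1, Finset.sum_mul]
  rw [Finset.sum_comm]
  refine Finset.sum_congr rfl fun s _ => ?_
  rw [Finset.mul_sum]
  simp only [ite_mul, zero_mul]
  rw [Finset.sum_ite_mem, Finset.univ_inter]
  refine Finset.sum_congr rfl fun i hi => ?_
  rw [← Finset.prod_erase_mul s χ hi]
  rw [mul_assoc, ← mul_div_assoc, mul_comm (χ i) (v i), mul_div_assoc, div_self (hχ i).ne', mul_one]

lemma key2 {n k : ℕ} (χ v : Fin n → ℝ) (hχ : ∀ i, 0 < χ i) :
    (∑ i : Fin n, ∑ j : Fin n, E2 n k i j χ * v i * v j)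
      + ∑ i : Fin n, E1 n k i χ * (v i ^ 2 / χ i) =
      ∑ s ∈ Finset.univ.powersetCard k, (∏ l ∈ s, χ l) * (∑ i ∈ s, v i / χ i) ^ 2 := by
  have hA : ∀ i : Fin n, ∑ j : Fin n, E2 n k i j χ * v i * v j =
      ∑ s ∈ Finset.univ.powersetCard k,
        if i ∈ s then ∑ j ∈ s.erase i, (∏ l ∈ (s.erase i).erase j, χ l) * v i * v j else 0 := by
    intro i
    simp only [E2, Finset.sum_mul]
    rw [Finset.sum_comm]
    refine Finset.sum_congr rfl fun s _ => ?_
    by_cases hi : i ∈ s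
    · simp only [hi, true_and, if_true, ite_mul, zero_mul]
      rw [Finset.sum_ite_mem, Finset.univ_inter]
    · simp [hi]
  simp only [hA, E1, Finset.sum_mul]
  rw [Finset.sum_comm]
  conv_lhs => rw [Finset.sum_comm (s := Finset.univ)]
  rw [← Finset.sum_add_distrib]
  refine Finset.sum_congr rfl fun s _ => ?_
  rw [← Finset.sum_add_distrib]
  simp only [ite_mul, zero_mul, ite_add_ite, add_zero]
  rw [Finset.sum_ite_mem, Finset.univ_inter]
  rw [sq, Finset.sum_mul_sum, Finset.mul_sum]
  refine Finset.sum_congr rfl fun i hi => ?_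
  rw [Finset.mul_sum, ← Finset.add_sum_erase _ _ hi]
  rw [add_comm]
  congr 1
  · -- diagonal term
    have h1 : χ i ≠ 0 := (hχ i).ne'
    rw [← Finset.prod_erase_mul s χ hi]
    field_simp
  · refine Finset.sum_congr rfl fun j hj => ?_
    have hji : j ∈ s := Finset.mem_of_mem_erase hj
    have h1 : χ i ≠ 0 := (hχ i).ne'
    have h2 : χ j ≠ 0 := (hχ j).ne'
    rw [← Finset.prod_erase_mul s χ hi, ← Finset.prod_erase_mul (s.erase i) χ hj]
    field_simp

lemma esymm_pos {n k : ℕ} (hkn : k ≤ n) (χ : Fin n → ℝ) (hχ : ∀ i, 0 < χ i) :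
    0 < esymm n k χ := by
  rw [esymm]
  refine Finset.sum_pos (fun s _ => Finset.prod_pos fun i _ => hχ i) ?_
  exact Finset.powersetCard_nonempty.2 (by simpa using hkn)

theorem stmt6 (n k : ℕ) (hk1 : 1 ≤ k) (hkn : k ≤ n)
    (g : (Fin n → ℝ) → ℝ) (hg : g = fun χ => Real.log (esymm n k χ)) :
    ∀ χ ∈ Gamma n, ∀ v : Fin n → ℝ,
      0 ≤ ∑ i : Fin n, ∑ j : Fin n,
        (pd n (pd n g i) j χ + (pd n g i χ / χ j) * (if i = j then 1 else 0))
          * v i * v j := by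
  intro χ hχ v
  have hσ : 0 < esymm n k χ := esymm_pos hkn χ hχ
  have hσ' : esymm n k χ ≠ 0 := hσ.ne'
  subst hg
  have h1 : ∀ i, pd n (fun y => Real.log (esymm n k y)) i χ = E1 n k i χ / esymm n k χ :=
    fun i => pd_g n k i χ hσ'
  have h2 : ∀ i j, pd n (pd n (fun y => Real.log (esymm n k y)) i) j χ =
      E2 n k i j χ / esymm n k χ - E1 n k i χ * E1 n k j χ / (esymm n k χ)^2 :=
    fun i j => pd2_g n k i j χ hσ'
  simp only [h1, h2]
  set σ := esymm n k χ with hσdef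
  have e1 : ∀ i j : Fin n,
      (E2 n k i j χ / σ - E1 n k i χ * E1 n k j χ / σ^2
        + E1 n k i χ / σ / χ j * (if i = j then 1 else 0)) * v i * v j
      = E2 n k i j χ * v i * v j / σ
        - (E1 n k i χ * v i) * (E1 n k j χ * v j) / σ^2
        + (if i = j then E1 n k i χ * (v i ^ 2 / χ i) / σ else 0) := by
    intro i j
    by_cases h : i = j
    · subst h; simp only [eq_self_iff_true, if_true]; ring
    · simp only [if_neg h]; ring
  simp only [e1, Finset.sum_add_distrib, Finset.sum_sub_distrib]
  have t3 : ∀ i : Fin n, (∑ j : Fin n, if i = j then E1 n k i χ * (v i ^ 2 / χ i) / σ else 0)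
      = E1 n k i χ * (v i ^ 2 / χ i) / σ := by
    intro i
    rw [Finset.sum_ite_eq]
    simp
  simp only [t3]
  have hd1 : ∀ i : Fin n, ∑ j : Fin n, E2 n k i j χ * v i * v j / σ
      = (∑ j : Fin n, E2 n k i j χ * v i * v j) / σ := fun i => (Finset.sum_div _ _ _).symm
  have hd2 : ∀ i : Fin n, ∑ j : Fin n, (E1 n k i χ * v i) * (E1 n k j χ * v j) / σ^2
      = (E1 n k i χ * v i) * (∑ j : Fin n, E1 n k j χ * v j) / σ^2 := by
    intro i
    rw [← Finset.sum_div, ← Finset.mul_sum]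
  simp only [hd1, hd2]
  rw [← Finset.sum_div, ← Finset.sum_div, ← Finset.sum_div, ← Finset.sum_mul]
  have hkey2 := key2 (k := k) χ v (fun i => hχ i)
  have hkey1 := key1 (k := k) χ v (fun i => hχ i)
  set S2 := ∑ s ∈ Finset.univ.powersetCard k, (∏ l ∈ s, χ l) * (∑ i ∈ s, v i / χ i) ^ 2 with hS2
  set S1 := ∑ s ∈ Finset.univ.powersetCard k, (∏ l ∈ s, χ l) * (∑ i ∈ s, v i / χ i) with hS1
  have heq : (∑ i : Fin n, ∑ j : Fin n, E2 n k i j χ * v i * v j) / σ -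
        ((∑ i : Fin n, E1 n k i χ * v i) * ∑ j : Fin n, E1 n k j χ * v j) / σ ^ 2 +
      (∑ i : Fin n, E1 n k i χ * (v i ^ 2 / χ i)) / σ = S2 / σ - S1 ^ 2 / σ ^ 2 := by
    rw [hkey1, ← hkey2]
    ring
  rw [heq]
  have hcs : S1 ^ 2 ≤ σ * S2 := by
    refine sum_sq_le_sum_mul_sum_of_sq_eq_mul _
      (fun s _ => Finset.prod_nonneg fun l _ => (hχ l).le)
      (fun s _ => mul_nonneg (Finset.prod_nonneg fun l _ => (hχ l).le) (sq_nonneg _))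
      (fun s _ => by ring)
  rw [sub_nonneg, div_le_div_iff₀ (by positivity) hσ]
  nlinarith [hcs, hσ]
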